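/- Let A be a real 2×2 matrix with det A < 0 (a linear vector field with a hyperbolic singularity of saddle type at the origin). Then there exist a real orthogonal 2×2 matrix P, constants C > 0, E > 0, and φ ∈ ℝ with cos(2φ) < 0 (i.e. φ ∈ (π/4, 3π/4) mod π) such that for every θ ∈ ℝ, (Pᵀ A P) applied to the vector (E·cos θ, sin θ) equals C·(E·cos(θ−φ), sin(θ+φ)). -/

import Mathlib

open Real Matrix

lemma key (M : Matrix (Fin 2) (Fin 2) ℝ) (a b c : ℝ)
    (hM : M = !![a, b; c, a]) (hb : 0 < b) (hc : 0 < c) (h : a ^ 2 < b * c) :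
    ∃ (C E φ : ℝ), 0 < C ∧ 0 < E ∧ cos (2 * φ) < 0 ∧
      ∀ θ : ℝ, M.mulVec ![E * cos θ, sin θ] = C • ![E * cos (θ - φ), sin (θ + φ)] := by
  have hC2 : (0:ℝ) < a ^ 2 + b * c := by nlinarith
  set C := Real.sqrt (a ^ 2 + b * c) with hCdef
  have hC : 0 < C := Real.sqrt_pos.mpr hC2
  have hCsq : C ^ 2 = a ^ 2 + b * c := Real.sq_sqrt hC2.le
  set E := Real.sqrt (b / c) with hEdef
  have hE : 0 < E := Real.sqrt_pos.mpr (by positivity)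
  set φ := Real.arccos (a / C) with hφdef
  have habs : |a / C| ≤ 1 := by
    rw [abs_div, abs_of_pos hC, div_le_one hC]
    have h1 : a ^ 2 ≤ C ^ 2 := by nlinarith
    nlinarith [abs_nonneg a, sq_abs a]
  have hcos : cos φ = a / C := Real.cos_arccos (neg_le_of_abs_le habs) (le_of_abs_le habs)
  have hsin : sin φ = Real.sqrt (b * c) / C := by
    rw [hφdef, Real.sin_arccos]
    have h2 : 1 - (a / C) ^ 2 = (b * c) / C ^ 2 := by
      field_simp
      linarith [hCsq]
    rw [h2, Real.sqrt_div (by positivity), Real.sqrt_sq hC.le]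
  have hcos' : C * cos φ = a := by rw [hcos]; field_simp
  have hsin' : C * sin φ = Real.sqrt (b * c) := by rw [hsin]; field_simp
  have hEb : E * Real.sqrt (b * c) = b := by
    rw [hEdef, ← Real.sqrt_mul (by positivity)]
    rw [show b / c * (b * c) = b ^ 2 * (c / c) by ring, div_self hc.ne', mul_one]
    exact Real.sqrt_sq hb.le
  have hcE : c * E = Real.sqrt (b * c) := by
    rw [hEdef, ← Real.sqrt_sq hc.le, ← Real.sqrt_mul (by positivity)]
    congr 1
    field_simp
    ring_nf
    rw [Real.sq_sqrt (sq_nonneg c)]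
  refine ⟨C, E, φ, hC, hE, ?_, ?_⟩
  · rw [Real.cos_two_mul, hcos]
    rw [show (2:ℝ) * (a / C) ^ 2 - 1 = (2 * a ^ 2 - C ^ 2) / C ^ 2 by field_simp]
    apply div_neg_of_neg_of_pos _ (by positivity)
    nlinarith
  · intro θ
    funext i
    fin_cases i <;>
      simp [hM, Matrix.mulVec, dotProduct, Fin.sum_univ_two, Real.cos_sub, Real.sin_add]
    · linear_combination (-(E*cos θ)) * hcos' - (E*sin θ) * hsin' - sin θ * hEb
    · linear_combination cos θ * hcE - sin θ * hcos' - cos θ * hsin'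

lemma rot_orth (t : ℝ) :
    (!![cos t, -sin t; sin t, cos t] : Matrix (Fin 2) (Fin 2) ℝ)ᵀ *
      !![cos t, -sin t; sin t, cos t] = 1 := by
  have hpy := Real.sin_sq_add_cos_sq t
  ext i j
  fin_cases i <;> fin_cases j <;>
    simp [Matrix.mul_apply, Fin.sum_univ_two, Matrix.one_apply, Matrix.transpose_apply,
      Matrix.vecHead, Matrix.vecTail] <;>
    first | linear_combination hpy | linear_combination -hpy | ring

lemma rot_conj (A : Matrix (Fin 2) (Fin 2) ℝ) (t : ℝ) :
    (!![cos t, -sin t; sin t, cos t] : Matrix (Fin 2) (Fin 2) ℝ)ᵀ * A *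
      !![cos t, -sin t; sin t, cos t] =
    !![A 0 0 * cos t ^ 2 + (A 0 1 + A 1 0) * sin t * cos t + A 1 1 * sin t ^ 2,
       A 0 1 * cos t ^ 2 + (A 1 1 - A 0 0) * sin t * cos t - A 1 0 * sin t ^ 2;
       A 1 0 * cos t ^ 2 + (A 1 1 - A 0 0) * sin t * cos t - A 0 1 * sin t ^ 2,
       A 0 0 * sin t ^ 2 - (A 0 1 + A 1 0) * sin t * cos t + A 1 1 * cos t ^ 2] := by
  ext i j
  fin_cases i <;> fin_cases j <;>
    simp [Matrix.mul_apply, Fin.sum_univ_two, Matrix.transpose_apply,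
      Matrix.vecHead, Matrix.vecTail] <;> ring

theorem saddle_normal_form (A : Matrix (Fin 2) (Fin 2) ℝ)
    (hdet : A.det < 0) :
    ∃ (P : Matrix (Fin 2) (Fin 2) ℝ) (C E φ : ℝ),
      Pᵀ * P = 1 ∧ 0 < C ∧ 0 < E ∧ cos (2 * φ) < 0 ∧
      ∀ θ : ℝ, (Pᵀ * A * P).mulVec ![E * cos θ, sin θ]
        = C • ![E * cos (θ - φ), sin (θ + φ)] := by
  have hdet' : A 0 0 * A 1 1 - A 0 1 * A 1 0 < 0 := by rwa [Matrix.det_fin_two] at hdet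
  obtain ⟨t, ht⟩ : ∃ t : ℝ, (A 0 0 - A 1 1) * cos (2*t) + (A 0 1 + A 1 0) * sin (2*t) = 0 := by
    by_cases hz : (⟨A 0 1 + A 1 0, A 1 1 - A 0 0⟩ : ℂ) = 0
    · refine ⟨0, ?_⟩
      rw [Complex.ext_iff] at hz
      simp at hz
      obtain ⟨h1, h2⟩ := hz
      have h3 : A 0 0 - A 1 1 = 0 := by linarith
      rw [h3, h1]; ring
    · refine ⟨(⟨A 0 1 + A 1 0, A 1 1 - A 0 0⟩ : ℂ).arg / 2, ?_⟩
      rw [show 2 * ((⟨A 0 1 + A 1 0, A 1 1 - A 0 0⟩ : ℂ).arg / 2)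
            = (⟨A 0 1 + A 1 0, A 1 1 - A 0 0⟩ : ℂ).arg by ring]
      rw [Complex.cos_arg hz, Complex.sin_arg]
      simp only [Complex.norm_def]
      ring
  rw [Real.cos_two_mul, Real.sin_two_mul] at ht
  have hpy := Real.sin_sq_add_cos_sq t
  set a := A 0 0 * cos t ^ 2 + (A 0 1 + A 1 0) * sin t * cos t + A 1 1 * sin t ^ 2 with hadef
  set b := A 0 1 * cos t ^ 2 + (A 1 1 - A 0 0) * sin t * cos t - A 1 0 * sin t ^ 2 with hbdef
  set c := A 1 0 * cos t ^ 2 + (A 1 1 - A 0 0) * sin t * cos t - A 0 1 * sin t ^ 2 with hcdef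
  have ha : A 0 0 * sin t ^ 2 - (A 0 1 + A 1 0) * sin t * cos t + A 1 1 * cos t ^ 2 = a := by
    rw [hadef]
    linear_combination -ht + (A 0 0 - A 1 1) * hpy
  have hd0 : (A 0 0 * sin t ^ 2 - (A 0 1 + A 1 0) * sin t * cos t + A 1 1 * cos t ^ 2) * a
      - b * c = A 0 0 * A 1 1 - A 0 1 * A 1 0 := by
    rw [hadef, hbdef, hcdef]
    linear_combination (A 0 0 * A 1 1 - A 0 1 * A 1 0) * (sin t ^ 2 + cos t ^ 2 + 1) * hpy
  rw [ha] at hd0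
  have hd : a ^ 2 - b * c = A 0 0 * A 1 1 - A 0 1 * A 1 0 := by rw [sq]; linarith
  have hbc : a ^ 2 < b * c := by nlinarith
  have hbcpos : 0 < b * c := by nlinarith [sq_nonneg a]
  rcases lt_trichotomy b 0 with hbneg | hb0 | hbpos
  · -- b < 0, c < 0 : use rotation by t + π/2
    have hcneg : c < 0 := by nlinarith
    refine ⟨!![cos (t + π/2), -sin (t + π/2); sin (t + π/2), cos (t + π/2)], ?_⟩
    have hM : (!![cos (t + π/2), -sin (t + π/2); sin (t + π/2), cos (t + π/2)]
          : Matrix (Fin 2) (Fin 2) ℝ)ᵀ * A *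
        !![cos (t + π/2), -sin (t + π/2); sin (t + π/2), cos (t + π/2)] = !![a, -c; -b, a] := by
      rw [rot_conj, Real.cos_add_pi_div_two, Real.sin_add_pi_div_two]
      ext i j
      fin_cases i <;> fin_cases j <;>
        simp [hadef, hbdef, hcdef, Matrix.vecHead, Matrix.vecTail] <;>
        first
        | linear_combination -ht + (A 0 0 - A 1 1) * hpy
        | ring
    obtain ⟨C, E, φ, hC, hE, hφ, hvec⟩ :=
      key _ a (-c) (-b) hM (by linarith) (by linarith) (by nlinarith)
    exact ⟨C, E, φ, rot_orth _, hC, hE, hφ, hvec⟩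
  · exfalso; rw [hb0] at hbcpos; simp at hbcpos
  · -- b > 0, c > 0
    have hcpos : 0 < c := by nlinarith
    refine ⟨!![cos t, -sin t; sin t, cos t], ?_⟩
    have hM : (!![cos t, -sin t; sin t, cos t] : Matrix (Fin 2) (Fin 2) ℝ)ᵀ * A *
        !![cos t, -sin t; sin t, cos t] = !![a, b; c, a] := by
      rw [rot_conj, ha]
    obtain ⟨C, E, φ, hC, hE, hφ, hvec⟩ := key _ a b c hM hbpos hcpos hbc
    exact ⟨C, E, φ, rot_orth _, hC, hE, hφ, hvec⟩
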